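/- (Second kind characteristic polynomials via the adjugate.) Let m ≥ 1, let λ : Fin m → ℝ, let D be the diagonal matrix with diagonal entries λ_k, let U be an invertible m×m real matrix, and set M := U · D · U⁻¹. Then for all vectors v, w ∈ ℝ^m and every x ∈ ℝ: vᵀ · adjugate(x·I_m − M) · w = ∑_{k=1}^{m} (vᵀU)_k · (U⁻¹w)_k · ∏_{l ≠ k} (x − λ_l). -/

import Mathlib

open Matrix

/-- Second kind characteristic polynomials via the adjugate: if `M = U D U⁻¹` with `D`
diagonal with entries `λ_k` and `U` invertible, then for all vectors `v, w` and all `x`,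
`vᵀ · adj(x·I − M) · w = ∑_k (vᵀU)_k (U⁻¹w)_k ∏_{l ≠ k} (x − λ_l)`. -/
theorem adjugate_spectral_expansion
    (m : ℕ) (hm : 1 ≤ m) (lam : Fin m → ℝ)
    (U : Matrix (Fin m) (Fin m) ℝ) (hU : IsUnit U.det)
    (M : Matrix (Fin m) (Fin m) ℝ)
    (hM : M = U * Matrix.diagonal lam * U⁻¹) :
    ∀ (v w : Fin m → ℝ) (x : ℝ),
      v ⬝ᵥ (x • (1 : Matrix (Fin m) (Fin m) ℝ) - M).adjugate.mulVec w
        = ∑ k, Matrix.vecMul v U k * Matrix.mulVec U⁻¹ w k *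
            ∏ l ∈ Finset.univ.erase k, (x - lam l) := by
  intro v w x
  have hUU : U * U⁻¹ = 1 := Matrix.mul_nonsing_inv U hU
  have hUU' : U⁻¹ * U = 1 := Matrix.nonsing_inv_mul U hU
  have hdetU : U⁻¹.det * U.det = 1 := by
    rw [← Matrix.det_mul, hUU']; simp
  have hfact : x • (1 : Matrix (Fin m) (Fin m) ℝ) - M
      = U * Matrix.diagonal (fun i => x - lam i) * U⁻¹ := by
    have hD : Matrix.diagonal (fun i => x - lam i)
        = x • (1 : Matrix (Fin m) (Fin m) ℝ) - Matrix.diagonal lam := by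
      ext i j
      by_cases h : i = j <;>
        simp [Matrix.diagonal, Matrix.one_apply, h, Matrix.smul_apply]
    rw [hD, Matrix.mul_sub, Matrix.sub_mul, hM]
    congr 1
    rw [Matrix.mul_smul, Matrix.mul_one, Matrix.smul_mul, hUU]
  have key : ∀ (A : Matrix (Fin m) (Fin m) ℝ), IsUnit A.det →
      A.adjugate = A.det • A⁻¹ := by
    intro A hA
    rw [Matrix.inv_def, smul_smul, Ring.mul_inverse_cancel _ hA, one_smul]
  have hUdet' : IsUnit (U⁻¹).det := IsUnit.of_mul_eq_one _ hdetU
  have hadj : (x • (1 : Matrix (Fin m) (Fin m) ℝ) - M).adjugate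
      = U * Matrix.diagonal (fun i => ∏ l ∈ Finset.univ.erase i, (x - lam l)) * U⁻¹ := by
    rw [hfact, Matrix.adjugate_mul_distrib, Matrix.adjugate_mul_distrib,
      Matrix.adjugate_diagonal, key U hU, key U⁻¹ hUdet',
      Matrix.nonsing_inv_nonsing_inv U hU]
    simp only [Matrix.smul_mul, Matrix.mul_smul, smul_smul, Matrix.mul_assoc]
    rw [mul_comm U.det, hdetU, one_smul]
  rw [hadj, ← Matrix.mulVec_mulVec, ← Matrix.mulVec_mulVec, Matrix.dotProduct_mulVec]
  simp only [Matrix.mulVec_diagonal, dotProduct]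
  exact Finset.sum_congr rfl fun k _ => by ring
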